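/- arXiv:2401.13237 — 2 statements merged into one kernel-verified Lean document; each statement's English description precedes it below -/
import Mathlib

section
/- For each fixed t > 0 with t ≠ 1, the function β ↦ g_β(t) := (1 - 1/β)(1 - t^β)/(1 - t^{β-1}), defined for β ∉ {0,1}, is monotonically increasing in β. -/
open Real MeasureTheory Set
open scoped ENNReal

/-- `psiF u = ∫ s in (0,1], exp (s*u)`, equal to `(exp u - 1)/u` for `u ≠ 0`. -/
noncomputable def psiF (u : ℝ) : ℝ := ∫ s in Set.Ioc (0:ℝ) 1, Real.exp (s * u)

lemma psiF_eq {u : ℝ} (hu : u ≠ 0) : psiF u = (Real.exp u - 1) / u := by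
  have h : psiF u = ∫ s in (0:ℝ)..1, Real.exp (s * u) := by
    rw [intervalIntegral.integral_of_le zero_le_one]; rfl
  rw [h, intervalIntegral.integral_comp_mul_right (fun x => Real.exp x) hu]
  simp [integral_exp, smul_eq_mul, div_eq_inv_mul]

lemma psiF_pos (u : ℝ) : 0 < psiF u := by
  rcases eq_or_ne u 0 with rfl | hu
  · simp [psiF]
  · rw [psiF_eq hu]
    rcases lt_or_gt_of_ne hu with h | h
    · apply div_pos_of_neg_of_neg
      · simpa using Real.exp_lt_one_iff.mpr h
      · exact h
    · apply div_pos
      · simpa using Real.one_lt_exp_iff.mpr h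
      · exact h

lemma memLp_aux (a : ℝ) (p : ℝ≥0∞) :
    MemLp (fun s : ℝ => Real.exp (s * a)) p (volume.restrict (Set.Ioc (0:ℝ) 1)) := by
  apply MemLp.of_bound ((continuous_id.mul continuous_const).rexp.aestronglyMeasurable)
    (Real.exp |a|)
  filter_upwards [ae_restrict_mem measurableSet_Ioc] with s hs
  rw [Real.norm_eq_abs, Real.abs_exp]
  apply Real.exp_le_exp.mpr
  calc s * a ≤ |s * a| := le_abs_self _
    _ = |s| * |a| := abs_mul s a
    _ ≤ 1 * |a| := by
        apply mul_le_mul_of_nonneg_right _ (abs_nonneg a)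
        rw [abs_le]; exact ⟨by linarith [hs.1], hs.2⟩
    _ = |a| := one_mul _

lemma psiF_holder {a b l m : ℝ} (hl : 0 < l) (hm : 0 < m) (hlm : l + m = 1) :
    psiF (l * a + m * b) ≤ psiF a ^ l * psiF b ^ m := by
  have hl1 : l < 1 := by linarith
  have hpq : (1 / l).HolderConjugate (1 / m) := by
    constructor
    · rw [one_div, inv_inv, one_div, inv_inv, inv_one]; exact hlm
    · positivity
    · positivity
  have key := integral_mul_le_Lp_mul_Lq_of_nonneg (μ := volume.restrict (Set.Ioc (0:ℝ) 1)) hpq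
    (f := fun s => Real.exp (s * (l * a))) (g := fun s => Real.exp (s * (m * b)))
    (Filter.Eventually.of_forall fun s => (Real.exp_pos _).le)
    (Filter.Eventually.of_forall fun s => (Real.exp_pos _).le)
    (memLp_aux _ _) (memLp_aux _ _)
  have h1 : (fun s : ℝ => Real.exp (s * (l * a)) * Real.exp (s * (m * b)))
      = fun s : ℝ => Real.exp (s * (l * a + m * b)) := by
    funext s; rw [← Real.exp_add]; ring_nf
  have h2 : (fun s : ℝ => Real.exp (s * (l * a)) ^ (1 / l))
      = fun s : ℝ => Real.exp (s * a) := by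
    funext s
    rw [← Real.exp_mul]
    congr 1
    field_simp
  have h3 : (fun s : ℝ => Real.exp (s * (m * b)) ^ (1 / m))
      = fun s : ℝ => Real.exp (s * b) := by
    funext s
    rw [← Real.exp_mul]
    congr 1
    field_simp
  simp only [h1, h2, h3, one_div_one_div] at key
  simpa [psiF] using key

/-- `FF = log ∘ psiF` is convex. -/
lemma FF_convex : ConvexOn ℝ Set.univ (fun u => Real.log (psiF u)) := by
  refine ⟨convex_univ, ?_⟩
  intro a _ b _ l m hl hm hlm
  rcases eq_or_lt_of_le hl with h0 | hl'
  · have hm1 : m = 1 := by linarith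
    simp [← h0, hm1]
  rcases eq_or_lt_of_le hm with h0 | hm'
  · have hl1 : l = 1 := by linarith
    simp [← h0, hl1]
  have key := psiF_holder (a := a) (b := b) hl' hm' hlm
  calc Real.log (psiF (l • a + m • b)) ≤ Real.log (psiF a ^ l * psiF b ^ m) := by
        apply Real.log_le_log (psiF_pos _)
        simpa [smul_eq_mul] using key
    _ = l • Real.log (psiF a) + m • Real.log (psiF b) := by
        rw [Real.log_mul (Real.rpow_pos_of_pos (psiF_pos a) l).ne'
          (Real.rpow_pos_of_pos (psiF_pos b) m).ne', Real.log_rpow (psiF_pos a),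
          Real.log_rpow (psiF_pos b)]
        simp [smul_eq_mul]

/-- Convexity implies: `u ↦ log psiF (u+c) - log psiF u` is monotone, in product form. -/
lemma psiF_prod_le {x y c : ℝ} (hxy : x ≤ y) (hc : 0 ≤ c) :
    psiF (x + c) * psiF y ≤ psiF x * psiF (y + c) := by
  rcases eq_or_lt_of_le (by linarith : x ≤ y + c) with hd | hd
  · have hc0 : c = 0 := by linarith
    have hxy0 : x = y := by linarith
    simp [hc0, hxy0, mul_comm]
  have hdpos : (0:ℝ) < y + c - x := by linarith
  set d := y + c - x with hdef
  set l := (y - x) / d with hldef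
  set m := c / d with hmdef
  have hl : 0 ≤ l := div_nonneg (by linarith) hdpos.le
  have hm : 0 ≤ m := div_nonneg hc hdpos.le
  have hlm : l + m = 1 := by
    rw [hldef, hmdef, ← add_div, hdef]
    field_simp
    ring
  have hF := FF_convex.2 (Set.mem_univ x) (Set.mem_univ (y + c))
  have e1 : l • x + m • (y + c) = x + c := by
    simp only [smul_eq_mul, hldef, hmdef]
    field_simp
    ring
  have e2 : m • x + l • (y + c) = y := by
    simp only [smul_eq_mul, hldef, hmdef]
    field_simp
    ring
  have i1 := hF hl hm hlm
  have i2 := hF hm hl (by linarith)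
  rw [e1] at i1
  rw [e2] at i2
  have hsum : Real.log (psiF (x + c)) + Real.log (psiF y)
      ≤ Real.log (psiF x) + Real.log (psiF (y + c)) := by
    simp only [smul_eq_mul] at i1 i2 ⊢
    have heq : l * Real.log (psiF x) + m * Real.log (psiF (y + c))
        + (m * Real.log (psiF x) + l * Real.log (psiF (y + c)))
        = Real.log (psiF x) + Real.log (psiF (y + c)) := by
      linear_combination (Real.log (psiF x) + Real.log (psiF (y + c))) * hlm
    linarith [add_le_add i1 i2, heq]
  have h1 : (0:ℝ) < psiF (x + c) * psiF y := mul_pos (psiF_pos _) (psiF_pos _)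
  have h2 : (0:ℝ) < psiF x * psiF (y + c) := mul_pos (psiF_pos _) (psiF_pos _)
  rw [← Real.exp_log h1, ← Real.exp_log h2]
  apply Real.exp_le_exp.mpr
  rwa [Real.log_mul (psiF_pos _).ne' (psiF_pos _).ne',
    Real.log_mul (psiF_pos _).ne' (psiF_pos _).ne']

/-- `g β t = f_{1/β}(t)`, the reparametrized Petz function. -/
noncomputable def gBeta (β t : ℝ) : ℝ := (1 - 1 / β) * (1 - t ^ β) / (1 - t ^ (β - 1))

lemma gBeta_eq_psiF {t : ℝ} (ht : 0 < t) (ht1 : t ≠ 1) {β : ℝ} (hb : β ≠ 0) (hb1 : β ≠ 1) :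
    gBeta β t = psiF (β * Real.log t) / psiF ((β - 1) * Real.log t) := by
  have hL : Real.log t ≠ 0 := Real.log_ne_zero_of_pos_of_ne_one ht ht1
  have hb1' : β - 1 ≠ 0 := sub_ne_zero.mpr hb1
  rw [psiF_eq (mul_ne_zero hb hL), psiF_eq (mul_ne_zero hb1' hL)]
  have hrpow : ∀ s : ℝ, t ^ s = Real.exp (s * Real.log t) := by
    intro s; rw [Real.rpow_def_of_pos ht, mul_comm]
  have hexp1 : Real.exp ((β - 1) * Real.log t) ≠ 1 := by
    intro h
    apply mul_ne_zero hb1' hL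
    have := Real.exp_log (x := (1:ℝ)) one_pos
    nlinarith [Real.log_exp ((β - 1) * Real.log t), congrArg Real.log h, Real.log_one]
  have key : ∀ a b x : ℝ, x ≠ 0 → 1 - b ≠ 0 → b - 1 ≠ 0 →
      (1 - 1/β) * (1 - a) / (1 - b) = ((a - 1)/(β * x))/((b - 1)/((β - 1) * x)) := by
    intro a b x hx h1b hb1''
    field_simp
    ring
  unfold gBeta
  rw [hrpow, hrpow]
  exact key _ _ _ hL (fun h => hexp1 (by linarith)) (fun h => hexp1 (by linarith))

theorem gBeta_monotone_in_beta (t : ℝ) (ht : 0 < t) (ht1 : t ≠ 1) :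
    ∀ β₁ β₂ : ℝ, β₁ ≠ 0 → β₁ ≠ 1 → β₂ ≠ 0 → β₂ ≠ 1 → β₁ ≤ β₂ →
      gBeta β₁ t ≤ gBeta β₂ t := by
  intro β₁ β₂ h10 h11 h20 h21 h12
  have hL : Real.log t ≠ 0 := Real.log_ne_zero_of_pos_of_ne_one ht ht1
  rw [gBeta_eq_psiF ht ht1 h10 h11, gBeta_eq_psiF ht ht1 h20 h21]
  rw [div_le_div_iff₀ (psiF_pos _) (psiF_pos _)]
  set L := Real.log t
  -- goal: psiF (β₁ L) * psiF ((β₂-1) L) ≤ psiF (β₂ L) * psiF ((β₁-1) L)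
  rcases lt_or_gt_of_ne hL with hneg | hpos
  · -- L < 0 : apply with x = β₂ L ≤ y = β₁ L, c = -L
    have h := psiF_prod_le (x := β₂ * L) (y := β₁ * L) (c := -L)
      (by nlinarith) (by linarith)
    have e1 : β₂ * L + -L = (β₂ - 1) * L := by ring
    have e2 : β₁ * L + -L = (β₁ - 1) * L := by ring
    rw [e1, e2] at h
    nlinarith [h]
  · -- L > 0 : apply with x = (β₁-1) L ≤ y = (β₂-1) L, c = L
    have h := psiF_prod_le (x := (β₁ - 1) * L) (y := (β₂ - 1) * L) (c := L)
      (by nlinarith) (by linarith)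
    have e1 : (β₁ - 1) * L + L = β₁ * L := by ring
    have e2 : (β₂ - 1) * L + L = β₂ * L := by ring
    rw [e1, e2] at h
    nlinarith [h]
end

section
/- For α ∈ (0, 1/2) and all t > 0 with t ≠ 1, the Petz function f_α(t) = (1-α)(1 - t^{1/α})/(1 - t^{(1-α)/α}) satisfies f_α(t) > f_{1/2}(t) = (1+t)/2, strictly exceeding the SLD Petz function. -/
open Real

private lemma hasDeriv_h (b s : ℝ) (hs : 0 < s) :
    HasDerivAt (fun x : ℝ => (b-2)*x^(b-1) - (b-1)*x^(b-2) + 1)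
      ((b-1)*(b-2)*(s^(b-2) - s^(b-3))) s := by
  have d1 : HasDerivAt (fun x : ℝ => x^(b-1)) ((b-1)*s^(b-1-1)) s :=
    Real.hasDerivAt_rpow_const (Or.inl hs.ne')
  have d2 : HasDerivAt (fun x : ℝ => x^(b-2)) ((b-2)*s^(b-2-1)) s :=
    Real.hasDerivAt_rpow_const (Or.inl hs.ne')
  have e1 : b-1-1 = b-2 := by ring
  have e2 : b-2-1 = b-3 := by ring
  rw [e1] at d1; rw [e2] at d2
  have := ((d1.const_mul (b-2)).sub (d2.const_mul (b-1))).add_const 1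
  exact this.congr_deriv (by ring)

private lemma hasDeriv_g (b s : ℝ) (hs : 0 < s) :
    HasDerivAt (fun x : ℝ => (b-2)*x^b - b*x^(b-1) + b*x - (b-2))
      (b*((b-2)*s^(b-1) - (b-1)*s^(b-2) + 1)) s := by
  have d1 : HasDerivAt (fun x : ℝ => x^b) (b*s^(b-1)) s :=
    Real.hasDerivAt_rpow_const (Or.inl hs.ne')
  have d2 : HasDerivAt (fun x : ℝ => x^(b-1)) ((b-1)*s^(b-1-1)) s :=
    Real.hasDerivAt_rpow_const (Or.inl hs.ne')
  have e2 : b-1-1 = b-2 := by ring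
  rw [e2] at d2
  have d3 : HasDerivAt (fun x : ℝ => b*x) b s := by simpa using (hasDerivAt_id s).const_mul b
  have := (((d1.const_mul (b-2)).sub (d2.const_mul b)).add d3).sub_const (b-2)
  exact this.congr_deriv (by ring)

private lemma cont_h (b : ℝ) (S : Set ℝ) (hS : ∀ x ∈ S, (0:ℝ) < x) :
    ContinuousOn (fun x : ℝ => (b-2)*x^(b-1) - (b-1)*x^(b-2) + 1) S :=
  fun x hx => ((hasDeriv_h b x (hS x hx)).continuousAt).continuousWithinAt

private lemma cont_g (b : ℝ) (S : Set ℝ) (hS : ∀ x ∈ S, (0:ℝ) < x) :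
    ContinuousOn (fun x : ℝ => (b-2)*x^b - b*x^(b-1) + b*x - (b-2)) S :=
  fun x hx => ((hasDeriv_g b x (hS x hx)).continuousAt).continuousWithinAt

private lemma h_pos (b : ℝ) (hb : 2 < b) :
    ∀ t : ℝ, 0 < t → t ≠ 1 → 0 < (b-2)*t^(b-1) - (b-1)*t^(b-2) + 1 := by
  intro t ht ht1
  have h1 : (b-2)*(1:ℝ)^(b-1) - (b-1)*(1:ℝ)^(b-2) + 1 = 0 := by
    rw [Real.one_rpow, Real.one_rpow]; ring
  rcases lt_or_gt_of_ne ht1 with hlt | hgt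
  · -- t < 1 : strictly antitone on [t,1]
    have hanti : StrictAntiOn (fun x : ℝ => (b-2)*x^(b-1) - (b-1)*x^(b-2) + 1) (Set.Icc t 1) := by
      apply strictAntiOn_of_deriv_neg (convex_Icc t 1)
      · exact cont_h b _ (fun x hx => lt_of_lt_of_le ht hx.1)
      · intro x hx
        rw [interior_Icc] at hx
        have hx0 : 0 < x := ht.trans hx.1
        rw [(hasDeriv_h b x hx0).deriv]
        have hxe : x^(b-2) < x^(b-3) := by
          apply Real.rpow_lt_rpow_of_exponent_gt hx0 (hx.2)
          linarith
        have : (0:ℝ) < (b-1)*(b-2) := by nlinarith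
        nlinarith
    have := hanti (Set.left_mem_Icc.2 hlt.le) (Set.right_mem_Icc.2 hlt.le) hlt
    simp only [Real.one_rpow] at this; linarith
  · -- 1 < t : strictly monotone on [1,∞)
    have hmono : StrictMonoOn (fun x : ℝ => (b-2)*x^(b-1) - (b-1)*x^(b-2) + 1) (Set.Ici 1) := by
      apply strictMonoOn_of_deriv_pos (convex_Ici 1)
      · exact cont_h b _ (fun x hx => lt_of_lt_of_le one_pos hx)
      · intro x hx
        rw [interior_Ici] at hx
        have hx0 : (0:ℝ) < x := lt_trans one_pos hx
        rw [(hasDeriv_h b x hx0).deriv]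
        have hxe : x^(b-3) < x^(b-2) := by
          apply Real.rpow_lt_rpow_of_exponent_lt hx
          linarith
        have : (0:ℝ) < (b-1)*(b-2) := by nlinarith
        nlinarith
    have := hmono (Set.self_mem_Ici) (Set.mem_Ici.2 hgt.le) hgt
    simp only [Real.one_rpow] at this; linarith

private lemma g_sign (b : ℝ) (hb : 2 < b) (t : ℝ) (ht : 0 < t) :
    (t < 1 → (b-2)*t^b - b*t^(b-1) + b*t - (b-2) < 0) ∧
    (1 < t → 0 < (b-2)*t^b - b*t^(b-1) + b*t - (b-2)) := by
  have g1 : (b-2)*(1:ℝ)^b - b*(1:ℝ)^(b-1) + b*1 - (b-2) = 0 := by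
    rw [Real.one_rpow, Real.one_rpow]; ring
  constructor
  · intro hlt
    have hmono : StrictMonoOn (fun x : ℝ => (b-2)*x^b - b*x^(b-1) + b*x - (b-2)) (Set.Icc t 1) := by
      apply strictMonoOn_of_deriv_pos (convex_Icc t 1)
      · exact cont_g b _ (fun x hx => lt_of_lt_of_le ht hx.1)
      · intro x hx
        rw [interior_Icc] at hx
        have hx0 : 0 < x := ht.trans hx.1
        rw [(hasDeriv_g b x hx0).deriv]
        have := h_pos b hb x hx0 (ne_of_lt hx.2)
        have hb0 : (0:ℝ) < b := by linarith
        positivity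
    have := hmono (Set.left_mem_Icc.2 hlt.le) (Set.right_mem_Icc.2 hlt.le) hlt
    simp only [Real.one_rpow] at this; linarith
  · intro hgt
    have hmono : StrictMonoOn (fun x : ℝ => (b-2)*x^b - b*x^(b-1) + b*x - (b-2)) (Set.Ici 1) := by
      apply strictMonoOn_of_deriv_pos (convex_Ici 1)
      · exact cont_g b _ (fun x hx => lt_of_lt_of_le one_pos hx)
      · intro x hx
        rw [interior_Ici] at hx
        have hx0 : (0:ℝ) < x := lt_trans one_pos hx
        rw [(hasDeriv_g b x hx0).deriv]
        have := h_pos b hb x hx0 (ne_of_gt hx)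
        have hb0 : (0:ℝ) < b := by linarith
        positivity
    have := hmono (Set.self_mem_Ici) (Set.mem_Ici.2 hgt.le) hgt
    simp only [Real.one_rpow] at this; linarith

theorem fAlpha_gt_fSLD_of_nonmonotone (α : ℝ) (hα : α ∈ Set.Ioo (0 : ℝ) (1 / 2)) :
    ∀ t : ℝ, 0 < t → t ≠ 1 →
      (1 - α) * (1 - t ^ (1 / α)) / (1 - t ^ ((1 - α) / α)) > (1 + t) / 2 := by
  obtain ⟨hα0, hα2⟩ := hα
  intro t ht ht1
  set b : ℝ := 1/α with hbdef
  have hb : 2 < b := by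
    rw [hbdef]
    rw [lt_div_iff₀ hα0]; linarith
  have hb0 : (0:ℝ) < b := by linarith
  have hαb : α * b = 1 := by rw [hbdef, mul_one_div, div_self hα0.ne']
  have hexp : (1 - α)/α = b - 1 := by
    rw [div_eq_iff hα0.ne', hbdef]
    field_simp
  have hab : (1 - α) * b = b - 1 := by
    have : (1-α)*b = b - α*b := by ring
    rw [this, hαb]
  rw [hexp]
  have hAB : t ^ b = t ^ (b-1) * t := by
    rw [← Real.rpow_add_one ht.ne' (b-1)]; ring_nf
  have hg := g_sign b hb t ht
  rcases lt_or_gt_of_ne ht1 with hlt | hgt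
  · -- t < 1: denominator 1 - t^(b-1) > 0
    have hB1 : t ^ (b-1) < 1 := Real.rpow_lt_one ht.le hlt (by linarith)
    have hden : 0 < 1 - t^(b-1) := by linarith
    rw [gt_iff_lt, div_lt_div_iff₀ (by norm_num : (0:ℝ) < 2) hden]
    have hgneg := hg.1 hlt
    rw [hAB] at hgneg
    nlinarith [hgneg, mul_pos hα0 hb0]
  · -- 1 < t: denominator 1 - t^(b-1) < 0
    have hB1 : 1 < t ^ (b-1) := by
      rw [Real.one_lt_rpow_iff_of_pos ht]; left; exact ⟨hgt, by linarith⟩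
    have hden : 0 < t^(b-1) - 1 := by linarith
    have hrw : (1 - α) * (1 - t ^ b) / (1 - t ^ (b-1)) =
        (1 - α) * (t ^ b - 1) / (t ^ (b-1) - 1) := by
      rw [div_eq_div_iff (by linarith) (by linarith)]; ring
    rw [gt_iff_lt, hrw, div_lt_div_iff₀ (by norm_num : (0:ℝ) < 2) hden]
    have hgpos := hg.2 hgt
    rw [hAB] at hgpos
    nlinarith [hgpos, mul_pos hα0 hb0]
end
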